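/- Let f ∈ ℤ[X] be monic, irreducible over ℚ, of degree d, let β₁,…,β_d be its roots and z_j = (1, β_j, …, β_j^{d-1})ᵀ the columns of the Vandermonde matrix Z. For every proper nonempty subset I of {1,…,d}, the complex span of {z_j : j ∈ I} intersects ℚ^d only in the zero vector. -/
import Mathlib


open Matrix Polynomial

private lemma aux_swap {M : Type*} [AddCommMonoid M] (n : ℕ) (F : ℕ → ℕ → M) :
    ∑ i ∈ Finset.range n, ∑ s ∈ Finset.Ico (i+1) (n+1), F i s
      = ∑ s ∈ Finset.range (n+1), ∑ i ∈ Finset.range s, F i s := by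
  rw [Finset.sum_sigma', Finset.sum_sigma']
  refine Finset.sum_nbij' (fun p => ⟨p.2, p.1⟩) (fun p => ⟨p.2, p.1⟩) ?_ ?_ ?_ ?_ ?_ <;>
    simp only [Finset.mem_sigma, Finset.mem_range, Finset.mem_Ico] <;>
    intro p hp
  · omega
  · omega
  · trivial
  · trivial
  · trivial

private lemma aux_swap2 {M : Type*} [AddCommMonoid M] (n : ℕ) (F : ℕ → ℕ → M) :
    ∑ i ∈ Finset.range n, ∑ s ∈ Finset.Ico (i+1) (n+1), F i s
      = ∑ m ∈ Finset.range n, ∑ i ∈ Finset.range (n - m), F i (i+1+m) := by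
  rw [Finset.sum_sigma', Finset.sum_sigma']
  refine Finset.sum_nbij' (fun p => ⟨p.2 - 1 - p.1, p.1⟩) (fun p => ⟨p.2, p.2+1+p.1⟩)
    ?_ ?_ ?_ ?_ ?_ <;>
    simp only [Finset.mem_sigma, Finset.mem_range, Finset.mem_Ico] <;>
    intro p hp
  · omega
  · omega
  · have h : p.1 + 1 + (p.2 - 1 - p.1) = p.2 := by omega
    rw [h]
  · have h : p.2 + 1 + p.1 - 1 - p.2 = p.1 := by omega
    rw [h]
  · have h : p.1 + 1 + (p.2 - 1 - p.1) = p.2 := by omega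
    rw [h]

/-- For a monic integer polynomial `f` irreducible over `ℚ` with roots
`β 0, …, β (d-1)` and Vandermonde columns `z j = (1, β j, …, (β j)^(d-1))`,
the complex span of `{z j : j ∈ I}`, for `I` a proper nonempty subset of the
index set, meets `ℚ^d` only in `0`. -/
theorem stmt_3 {d : ℕ} (hd : 1 ≤ d)
    (f : Polynomial ℤ) (hmon : f.Monic) (hdeg : f.natDegree = d)
    (hirr : Irreducible (f.map (Int.castRingHom ℚ)))
    (β : Fin d → ℂ) (hinj : Function.Injective β)
    (hroot : ∀ j, Polynomial.aeval (β j) f = 0)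
    (z : Fin d → (Fin d → ℂ)) (hz : ∀ j i, z j i = β j ^ (i : ℕ))
    (I : Finset (Fin d)) (hne : I.Nonempty) (hproper : I ≠ Finset.univ)
    (x : Fin d → ℂ)
    (hx : x ∈ Submodule.span ℂ (z '' (I : Set (Fin d))))
    (hrat : ∀ i, ∃ q : ℚ, x i = (q : ℂ)) :
    x = 0 := by
  choose q hq using hrat
  obtain ⟨k, hk⟩ : ∃ k, k ∉ I := by
    by_contra h; push_neg at h
    exact hproper (Finset.eq_univ_iff_forall.mpr h)
  have had : f.coeff d = 1 := by rw [← hdeg]; exact hmon.coeff_natDegree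
  have hagt : ∀ s, d < s → f.coeff s = 0 := fun s hs =>
    f.coeff_eq_zero_of_natDegree_lt (hdeg ▸ hs)
  -- evaluation of f as an explicit sum
  have hfβ : ∀ j, ∑ s ∈ Finset.range (d+1), (f.coeff s : ℂ) * β j ^ s = 0 := by
    intro j
    have := hroot j
    rw [Polynomial.aeval_eq_sum_range, hdeg] at this
    simpa [zsmul_eq_mul] using this
  -- the dual vector w
  set w : Fin d → ℂ := fun i =>
    ∑ s ∈ Finset.Ico ((i:ℕ)+1) (d+1), (f.coeff s : ℂ) * β k ^ (s - 1 - (i:ℕ)) with hw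
  -- w kills each z j for j ≠ k
  have hker : ∀ j, j ≠ k → ∑ i, z j i * w i = 0 := by
    intro j hjk
    have hβ : β j - β k ≠ 0 := sub_ne_zero.mpr (fun h => hjk (hinj h))
    have hmain : (∑ i, z j i * w i) * (β j - β k) = 0 := by
      have h1 : ∑ i, z j i * w i
          = ∑ i ∈ Finset.range d, ∑ s ∈ Finset.Ico (i+1) (d+1),
              (f.coeff s : ℂ) * (β j ^ i * β k ^ (s - 1 - i)) := by
        rw [← Fin.sum_univ_eq_sum_range
          (fun i => ∑ s ∈ Finset.Ico (i+1) (d+1),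
            (f.coeff s : ℂ) * (β j ^ i * β k ^ (s - 1 - i)))]
        refine Finset.sum_congr rfl fun i _ => ?_
        rw [hz, hw, Finset.mul_sum]
        refine Finset.sum_congr rfl fun s _ => by ring
      rw [h1, aux_swap, Finset.sum_mul]
      have h2 : ∀ s ∈ Finset.range (d+1),
          (∑ i ∈ Finset.range s, (f.coeff s : ℂ) * (β j ^ i * β k ^ (s - 1 - i)))
            * (β j - β k) = (f.coeff s : ℂ) * (β j ^ s - β k ^ s) := by
        intro s _
        rw [← Finset.mul_sum, mul_assoc, geom_sum₂_mul]
      rw [Finset.sum_congr rfl h2]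
      have : ∑ s ∈ Finset.range (d+1), (f.coeff s : ℂ) * (β j ^ s - β k ^ s)
          = (∑ s ∈ Finset.range (d+1), (f.coeff s : ℂ) * β j ^ s)
            - ∑ s ∈ Finset.range (d+1), (f.coeff s : ℂ) * β k ^ s := by
        rw [← Finset.sum_sub_distrib]
        exact Finset.sum_congr rfl fun s _ => by ring
      rw [this, hfβ j, hfβ k, sub_zero]
    rcases mul_eq_zero.mp hmain with h | h
    · exact h
    · exact absurd h hβ
  -- x is killed by w
  have hφx : ∑ i, x i * w i = 0 := by
    let φ : (Fin d → ℂ) →ₗ[ℂ] ℂ :=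
      { toFun := fun v => ∑ i, v i * w i
        map_add' := fun u v => by simp [add_mul, Finset.sum_add_distrib]
        map_smul' := fun c v => by simp [Finset.mul_sum, mul_assoc] }
    have hle : Submodule.span ℂ (z '' (I : Set (Fin d))) ≤ LinearMap.ker φ := by
      rw [Submodule.span_le]
      rintro _ ⟨j, hj, rfl⟩
      have hjk : j ≠ k := fun h => hk (h ▸ hj)
      simpa [φ] using hker j hjk
    simpa [φ] using hle hx
  -- extended rational coefficients
  set q' : ℕ → ℚ := fun i => if h : i < d then q ⟨i, h⟩ else 0 with hq'
  set r : ℕ → ℚ := fun m => ∑ i ∈ Finset.range d, q' i * (f.coeff (i+1+m) : ℚ) with hr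
  -- the rational relation at β k
  have hrel : ∑ m ∈ Finset.range d, (r m : ℂ) * β k ^ m = 0 := by
    have h1 : ∑ i, x i * w i
        = ∑ i ∈ Finset.range d, ∑ s ∈ Finset.Ico (i+1) (d+1),
            (q' i : ℂ) * (f.coeff s : ℂ) * β k ^ (s - 1 - i) := by
      rw [← Fin.sum_univ_eq_sum_range
        (fun i => ∑ s ∈ Finset.Ico (i+1) (d+1),
          (q' i : ℂ) * (f.coeff s : ℂ) * β k ^ (s - 1 - i))]
      refine Finset.sum_congr rfl fun i _ => ?_
      rw [hq i, hw, Finset.mul_sum]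
      refine Finset.sum_congr rfl fun s _ => ?_
      have : q' (i : ℕ) = q i := by simp [hq', i.isLt]
      rw [this]; ring
    rw [h1, aux_swap2] at hφx
    have hexp : ∀ i m : ℕ, i + 1 + m - 1 - i = m := fun i m => by omega
    simp only [hexp] at hφx
    rw [← hφx]
    refine Finset.sum_congr rfl fun m hm => ?_
    simp only [Finset.mem_range] at hm
    rw [Finset.sum_subset (Finset.range_subset_range.mpr (show d - m ≤ d by omega))
      (fun i hi hni => ?_)]
    · simp only [hr]
      push_cast
      rw [Finset.sum_mul]
    · simp only [Finset.mem_range] at hi hni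
      rw [hagt (i + 1 + m) (by omega)]
      push_cast; ring
  -- package as a rational polynomial
  set R : Polynomial ℚ := ∑ m ∈ Finset.range d, Polynomial.monomial m (r m) with hR
  have hRaeval : Polynomial.aeval (β k) R = 0 := by
    rw [hR, map_sum]
    rw [← hrel]
    refine Finset.sum_congr rfl fun m _ => ?_
    rw [Polynomial.aeval_monomial]
    norm_num
  -- minpoly facts
  have hFmonic : (f.map (Int.castRingHom ℚ)).Monic := hmon.map _
  have hFaeval : Polynomial.aeval (β k) (f.map (Int.castRingHom ℚ)) = 0 := by
    have : Int.castRingHom ℚ = algebraMap ℤ ℚ := rfl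
    rw [this, Polynomial.aeval_map_algebraMap]
    exact hroot k
  have hFdeg : (f.map (Int.castRingHom ℚ)).natDegree = d := by
    rw [hmon.natDegree_map]; exact hdeg
  have hR0 : R = 0 := by
    by_contra hR0
    have hmin : minpoly ℚ (β k) = f.map (Int.castRingHom ℚ) :=
      (minpoly.eq_of_irreducible_of_monic hirr hFaeval hFmonic).symm
    have hdvd : f.map (Int.castRingHom ℚ) ∣ R := hmin ▸ minpoly.dvd ℚ (β k) hRaeval
    have hle : (f.map (Int.castRingHom ℚ)).natDegree ≤ R.natDegree :=
      Polynomial.natDegree_le_of_dvd hdvd hR0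
    have hlt : R.natDegree ≤ d - 1 := by
      refine Polynomial.natDegree_sum_le_of_forall_le _ _ fun m hm => ?_
      refine le_trans (Polynomial.natDegree_monomial_le _) ?_
      simp only [Finset.mem_range] at hm; omega
    omega
  have hrm : ∀ m, m < d → r m = 0 := by
    intro m hm
    have : R.coeff m = r m := by
      rw [hR, Polynomial.finset_sum_coeff]
      rw [Finset.sum_eq_single m]
      · simp
      · intro b _ hb; simp [Polynomial.coeff_monomial, hb]
      · intro h; exact absurd (Finset.mem_range.mpr hm) h
    rw [hR0] at this
    simpa using this.symm
  -- triangular induction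
  have hq0 : ∀ j, q' j = 0 := by
    intro j
    induction j using Nat.strong_induction_on with
    | _ j ih =>
      by_cases hj : j < d
      · have h1 : r (d - 1 - j) = 0 := hrm _ (by omega)
        simp only [hr] at h1
        rw [Finset.sum_eq_single j] at h1
        · have : j + 1 + (d - 1 - j) = d := by omega
          rw [this, had] at h1
          simpa using h1
        · intro i hi hij
          simp only [Finset.mem_range] at hi
          rcases lt_or_gt_of_ne hij with h | h
          · rw [ih i h, zero_mul]
          · have : d < i + 1 + (d - 1 - j) := by omega
            rw [hagt _ this]; push_cast; ring
        · intro h; exact absurd (Finset.mem_range.mpr hj) h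
      · simp [hq', hj]
  funext i
  have : q i = 0 := by
    have := hq0 (i : ℕ)
    simpa [hq', i.isLt] using this
  simp [hq i, this]
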